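/- Under the hypotheses of the previous identity (distinct nonzero $\beta_i$, distinct nonzero $\gamma_j$ with $\beta_i + \gamma_j \ne 0$, and normalizations $\sum_i C_i/\beta_i = \sum_j D_j/\gamma_j = 1$, with $H_k$ and $Q_k$ defined as $H_k = \frac{C_k}{\beta_k}\sum_{j} \frac{D_j}{\beta_k+\gamma_j}$ and $Q_k = D_k \sum_{i} \frac{C_i}{\beta_i(\beta_i+\gamma_k)} - \frac{D_k}{\gamma_k}$), one has $\sum_{i=1}^{M} H_i - \sum_{i=1}^{N} Q_i - 1 = 0$. -/
import Mathlib


open Finset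

theorem wiener_hopf_sum_identity (M N : ℕ) (hM : 1 ≤ M) (hN : 1 ≤ N)
    (β : Fin M → ℂ) (γ : Fin N → ℂ)
    (hβ0 : ∀ i, β i ≠ 0) (hγ0 : ∀ j, γ j ≠ 0)
    (hβ : Function.Injective β) (hγ : Function.Injective γ)
    (hβγ : ∀ i j, β i + γ j ≠ 0)
    (C : Fin M → ℂ) (D : Fin N → ℂ)
    (hC : ∑ i, C i / β i = 1) (hD : ∑ j, D j / γ j = 1)
    (H : Fin M → ℂ) (hH : ∀ k, H k = C k / β k * ∑ j, D j / (β k + γ j))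
    (Q : Fin N → ℂ)
    (hQ : ∀ k, Q k = D k * (∑ i, C i / (β i * (β i + γ k))) - D k / γ k) :
    ∑ i, H i - ∑ i, Q i - 1 = 0 := by
  have hQ' : ∀ k, Q k = - ∑ i, D k / γ k * (C i / (β i + γ k)) := by
    intro k
    rw [hQ k]
    have h1 : ∀ i, C i / (β i * (β i + γ k)) =
        C i / β i / γ k - C i / (β i + γ k) / γ k := by
      intro i
      have := hβ0 i; have := hγ0 k; have := hβγ i k
      field_simp
      ring
    rw [Finset.sum_congr rfl fun i _ => h1 i, Finset.sum_sub_distrib,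
      ← Finset.sum_div, ← Finset.sum_div, hC]
    have h2 : ∑ i, D k / γ k * (C i / (β i + γ k))
        = D k * ((∑ i, C i / (β i + γ k)) / γ k) := by
      rw [Finset.sum_div, Finset.mul_sum]
      exact Finset.sum_congr rfl fun i _ => by ring
    rw [mul_sub, h2]; ring
  have hH' : ∀ k, H k = ∑ j, C k / β k * (D j / (β k + γ j)) := by
    intro k; rw [hH k, Finset.mul_sum]
  calc ∑ i, H i - ∑ i, Q i - 1
      = (∑ i, ∑ j, C i / β i * (D j / (β i + γ j)))
        + (∑ j, ∑ i, D j / γ j * (C i / (β i + γ j))) - 1 := by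
        rw [Finset.sum_congr rfl fun i _ => hH' i,
          Finset.sum_congr rfl fun j _ => hQ' j, Finset.sum_neg_distrib]
        ring
    _ = ∑ i, ∑ j, C i / β i * (D j / γ j) - 1 := by
        rw [Finset.sum_comm (f := fun j i => D j / γ j * (C i / (β i + γ j))),
          ← Finset.sum_add_distrib]
        congr 1
        refine Finset.sum_congr rfl fun i _ => ?_
        rw [← Finset.sum_add_distrib]
        refine Finset.sum_congr rfl fun j _ => ?_
        have := hβ0 i; have := hγ0 j; have := hβγ i j
        field_simp
        ring
    _ = 0 := by
        have : ∑ i, ∑ j, C i / β i * (D j / γ j)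
            = (∑ i, C i / β i) * (∑ j, D j / γ j) := by
          rw [Finset.sum_mul]
          exact Finset.sum_congr rfl fun i _ => by rw [Finset.mul_sum]
        rw [this, hC, hD]; ring
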